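/- Let F_1, ..., F_k : F_2^{2b} → F_2^b be mutually orthogonal CA defined by bipermutive rules of diameter d = b+1 (pairwise, the map z ↦ (F_l(z), F_m(z)) is bijective for l ≠ m), with k ≥ 2. Define the 2^{2b} × kb binary array A whose row indexed by z ∈ F_2^{2b} is the concatenation (F_1(z), F_2(z), ..., F_k(z)). Then A is an orthogonal array OA(2^{2b}, kb, 2, 2): for any two distinct columns i ≠ j, each pair in F_2^2 occurs exactly 2^{2b−2} times among the rows. -/

import Mathlib

open Finset

/-- A local rule `f : F_2^d → F_2` is bipermutive if
`f(x₁,…,x_d) = x₁ ⊕ φ(x₂,…,x_{d-1}) ⊕ x_d` for some `φ`. -/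
def Bipermutive {d : ℕ} (hd : 2 ≤ d) (f : (Fin d → ZMod 2) → ZMod 2) : Prop :=
  ∃ φ : (Fin (d - 2) → ZMod 2) → ZMod 2, ∀ x : Fin d → ZMod 2,
    f x = x ⟨0, by omega⟩
        + φ (fun i => x ⟨i.val + 1, by have := i.isLt; omega⟩)
        + x ⟨d - 1, by omega⟩

/-- The no-boundary CA `F : F_2^{2b} → F_2^b` with local rule `f` of diameter `d = b + 1`:
it applies `f` to each of the `b` windows of `d` consecutive input bits. -/
def CA2 {b : ℕ} (f : (Fin (b + 1) → ZMod 2) → ZMod 2)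
    (z : Fin (2 * b) → ZMod 2) (i : Fin b) : ZMod 2 :=
  f fun j => z ⟨i.val + j.val, by have hi := i.isLt; have hj := j.isLt; omega⟩

/-- Concatenation of two `b`-bit vectors into a `2b`-bit vector. -/
def concat {b : ℕ} (x y : Fin b → ZMod 2) (i : Fin (2 * b)) : ZMod 2 :=
  if h : i.val < b then x ⟨i.val, h⟩ else y ⟨i.val - b, by have := i.isLt; omega⟩

lemma fiber_mul_card {α β : Type*} [Fintype α] [Fintype β] [DecidableEq β]
    (f : α → β)
    (h : ∀ y₀ y₁ : β, (univ.filter fun x => f x = y₀).card = (univ.filter fun x => f x = y₁).card)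
    (y : β) : (univ.filter fun x => f x = y).card * Fintype.card β = Fintype.card α := by
  have h2 := Finset.card_eq_sum_card_fiberwise (f := f) (s := univ) (t := univ)
    (fun x _ => mem_univ _)
  rw [show Fintype.card α = (univ : Finset α).card from rfl, h2,
    Finset.sum_congr rfl (fun y' _ => h y' y)]
  rw [Finset.sum_const, smul_eq_mul, mul_comm]
  rfl

lemma fiber_le {α β : Type*} [Fintype α] [DecidableEq β]
    (f : α → β) (y₀ y₁ : β) (T : α ≃ α) (hT : ∀ x, f x = y₀ → f (T x) = y₁) :
    (univ.filter fun x => f x = y₀).card ≤ (univ.filter fun x => f x = y₁).card := by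
  apply Finset.card_le_card_of_injOn T
  · intro x hx
    simp only [Finset.mem_coe, mem_filter, mem_univ, true_and] at hx ⊢
    exact hT x hx
  · exact fun a _ b _ hab => T.injective hab

lemma right_CA2_injective {b : ℕ} (hb : 1 ≤ b) (f : (Fin (b + 1) → ZMod 2) → ZMod 2)
    (hf : Bipermutive (by omega) f) :
    Function.Injective (fun z : Fin (2 * b) → ZMod 2 =>
      ((fun t : Fin b => z ⟨b + t.val, by have := t.isLt; omega⟩), CA2 f z)) := by
  obtain ⟨φ, hφ⟩ := hf
  intro z z' h
  have hR : ∀ t : Fin b, z ⟨b + t.val, by have := t.isLt; omega⟩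
      = z' ⟨b + t.val, by have := t.isLt; omega⟩ :=
    fun t => congrFun (congrArg Prod.fst h) t
  have hC : ∀ i : Fin b, CA2 f z i = CA2 f z' i :=
    fun i => congrFun (congrArg Prod.snd h) i
  have key : ∀ n : ℕ, ∀ idx : Fin (2 * b), 2 * b ≤ idx.val + n → z idx = z' idx := by
    intro n
    induction n with
    | zero => intro idx hidx; exact absurd hidx (by have := idx.isLt; omega)
    | succ n IH =>
      intro idx hidx
      by_cases hB : b ≤ idx.val
      · have hidx2 : idx = ⟨b + (idx.val - b), by have := idx.isLt; omega⟩ :=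
          Fin.ext (by simp; omega)
        rw [hidx2]
        exact hR ⟨idx.val - b, by have := idx.isLt; omega⟩
      · push_neg at hB
        have hCi := hC ⟨idx.val, hB⟩
        rw [CA2, CA2, hφ, hφ] at hCi
        simp only at hCi
        have e2 : (fun i : Fin (b + 1 - 2) => z ⟨idx.val + (i.val + 1), by
              have := i.isLt; have := idx.isLt; omega⟩)
            = (fun i : Fin (b + 1 - 2) => z' ⟨idx.val + (i.val + 1), by
              have := i.isLt; have := idx.isLt; omega⟩) := by
          funext t
          exact IH _ (by have := t.isLt; simp; omega)
        have e3 : z ⟨idx.val + (b + 1 - 1), by omega⟩ = z' ⟨idx.val + (b + 1 - 1), by omega⟩ :=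
          IH _ (by simp; omega)
        rw [e2, e3] at hCi
        have := add_right_cancel hCi
        have h0 := add_right_cancel this
        have e1 : idx = (⟨idx.val + 0, by have := idx.isLt; omega⟩ : Fin (2 * b)) :=
          Fin.ext (by simp)
        rw [e1]
        exact h0
  exact funext fun idx => key (2 * b) idx (by omega)

lemma card_filter_comp_equiv {α β : Type*} [Fintype α] [Fintype β] (e : α ≃ β)
    (p : β → Prop) [DecidablePred p] :
    (univ.filter fun a => p (e a)).card = (univ.filter p).card := by
  apply Finset.card_bij' (fun a _ => e a) (fun b _ => e.symm b)
  · intro a ha; simp only [mem_filter, mem_univ, true_and] at ha ⊢; exact ha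
  · intro b hb; simp only [mem_filter, mem_univ, true_and] at hb ⊢
    simpa using hb
  · intro a _; simp
  · intro b _; simp

lemma count_VV {b : ℕ} (hb : 1 ≤ b)
    (E : ((Fin b → ZMod 2) × (Fin b → ZMod 2)) → ZMod 2 × ZMod 2)
    (hE : ∀ y₀ y₁ : ZMod 2 × ZMod 2,
      ∃ T : ((Fin b → ZMod 2) × (Fin b → ZMod 2)) ≃ ((Fin b → ZMod 2) × (Fin b → ZMod 2)),
        ∀ w, E w = y₀ → E (T w) = y₁)
    (y : ZMod 2 × ZMod 2) :
    (univ.filter fun w => E w = y).card = 2 ^ (2 * b - 2) := by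
  have hall : ∀ y₀ y₁ : ZMod 2 × ZMod 2,
      (univ.filter fun w => E w = y₀).card = (univ.filter fun w => E w = y₁).card := by
    intro y₀ y₁
    obtain ⟨T, hT⟩ := hE y₀ y₁
    obtain ⟨T', hT'⟩ := hE y₁ y₀
    exact le_antisymm (fiber_le E y₀ y₁ T hT) (fiber_le E y₁ y₀ T' hT')
  have hm := fiber_mul_card E hall y
  have hcβ : Fintype.card (ZMod 2 × ZMod 2) = 4 := by simp
  have hcα : Fintype.card ((Fin b → ZMod 2) × (Fin b → ZMod 2)) = 2 ^ (2 * b) := by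
    simp [Fintype.card_prod, Fintype.card_fun]
    rw [← pow_add]
    congr 1
    omega
  rw [hcβ, hcα] at hm
  have h4 : 2 ^ (2 * b) = 2 ^ (2 * b - 2) * 4 := by
    rw [show 2 * b = 2 * b - 2 + 2 by omega, pow_add]
    norm_num
  omega

theorem moca_binary_orthogonal_array {b k : ℕ} (hb : 1 ≤ b) (hk : 2 ≤ k)
    (fs : Fin k → (Fin (b + 1) → ZMod 2) → ZMod 2)
    (hbip : ∀ l, Bipermutive (by omega) (fs l))
    (horth : ∀ l m, l ≠ m → Function.Bijective fun z : Fin (2 * b) → ZMod 2 =>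
      (CA2 (fs l) z, CA2 (fs m) z)) :
    ∀ i j : Fin k × Fin b, i ≠ j → ∀ a c : ZMod 2,
      (univ.filter fun z : Fin (2 * b) → ZMod 2 =>
        CA2 (fs i.1) z i.2 = a ∧ CA2 (fs j.1) z j.2 = c).card = 2 ^ (2 * b - 2) := by
  intro i j hij a c
  by_cases h1 : i.1 = j.1
  · -- same CA, different coordinates
    have h2 : i.2 ≠ j.2 := fun h2 => hij (Prod.ext h1 h2)
    set G := fun z : Fin (2 * b) → ZMod 2 =>
      ((fun t : Fin b => z ⟨b + t.val, by have := t.isLt; omega⟩), CA2 (fs i.1) z) with hG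
    have hGbij : Function.Bijective G :=
      (Fintype.bijective_iff_injective_and_card G).mpr
        ⟨right_CA2_injective hb (fs i.1) (hbip i.1), by
          simp [Fintype.card_fun]
          rw [← pow_add]
          congr 1
          omega⟩
    set e := Equiv.ofBijective G hGbij with he
    set E : ((Fin b → ZMod 2) × (Fin b → ZMod 2)) → ZMod 2 × ZMod 2 :=
      fun w => (w.2 i.2, w.2 j.2) with hE
    have hform : ∀ z : Fin (2 * b) → ZMod 2,
        (CA2 (fs i.1) z i.2 = a ∧ CA2 (fs j.1) z j.2 = c) ↔ (E (e z) = (a, c)) := by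
      intro z
      rw [h1]
      rw [← h1]
      simp [hE, he, hG, Equiv.ofBijective, Prod.ext_iff]
    rw [filter_congr (fun z _ => hform z), card_filter_comp_equiv e (fun w => E w = (a, c))]
    apply count_VV hb
    intro y₀ y₁
    refine ⟨(Equiv.refl _).prodCongr (Equiv.addLeft
      (Pi.single i.2 (y₁.1 - y₀.1) + Pi.single j.2 (y₁.2 - y₀.2))), ?_⟩
    intro w hw
    rw [Prod.ext_iff] at hw ⊢
    obtain ⟨hw1, hw2⟩ := hw
    constructor
    · show ((Pi.single i.2 (y₁.1 - y₀.1) + Pi.single j.2 (y₁.2 - y₀.2) + w.2 : Fin b → ZMod 2)) i.2 = y₁.1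
      simp [Pi.single_eq_same, Pi.single_eq_of_ne h2]
      rw [show w.2 i.2 = y₀.1 from hw1]
      ring
    · show ((Pi.single i.2 (y₁.1 - y₀.1) + Pi.single j.2 (y₁.2 - y₀.2) + w.2 : Fin b → ZMod 2)) j.2 = y₁.2
      simp [Pi.single_eq_same, Pi.single_eq_of_ne (Ne.symm h2)]
      rw [show w.2 j.2 = y₀.2 from hw2]
      ring
  · -- different CAs
    set G := fun z : Fin (2 * b) → ZMod 2 => (CA2 (fs i.1) z, CA2 (fs j.1) z) with hG
    set e := Equiv.ofBijective G (horth i.1 j.1 h1) with he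
    set E : ((Fin b → ZMod 2) × (Fin b → ZMod 2)) → ZMod 2 × ZMod 2 :=
      fun w => (w.1 i.2, w.2 j.2) with hE
    have hform : ∀ z : Fin (2 * b) → ZMod 2,
        (CA2 (fs i.1) z i.2 = a ∧ CA2 (fs j.1) z j.2 = c) ↔ (E (e z) = (a, c)) := by
      intro z
      simp [hE, he, hG, Equiv.ofBijective, Prod.ext_iff]
    rw [filter_congr (fun z _ => hform z), card_filter_comp_equiv e (fun w => E w = (a, c))]
    apply count_VV hb
    intro y₀ y₁
    refine ⟨(Equiv.addLeft (Pi.single i.2 (y₁.1 - y₀.1))).prodCongr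
      (Equiv.addLeft (Pi.single j.2 (y₁.2 - y₀.2))), ?_⟩
    intro w hw
    rw [Prod.ext_iff] at hw ⊢
    obtain ⟨hw1, hw2⟩ := hw
    constructor
    · show ((Pi.single i.2 (y₁.1 - y₀.1) + w.1 : Fin b → ZMod 2)) i.2 = y₁.1
      simp [Pi.single_eq_same]
      rw [show w.1 i.2 = y₀.1 from hw1]
      ring
    · show ((Pi.single j.2 (y₁.2 - y₀.2) + w.2 : Fin b → ZMod 2)) j.2 = y₁.2
      simp [Pi.single_eq_same]
      rw [show w.2 j.2 = y₀.2 from hw2]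
      ring
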